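/- Let G be a free group on finitely many generators with word length |·|. For every t > 0, the Haagerup kernel K_t(g,h) = exp(−t|h⁻¹g|) is strictly positive definite on G × G. -/

import Mathlib

open scoped ComplexOrder ComplexConjugate

namespace HaagerupAux
open FreeGroup List

variable {α : Type*} [DecidableEq α]

/-- the no-cancellation relation -/
def Rel : (α × Bool) → (α × Bool) → Prop := fun a b => ¬(a.1 = b.1 ∧ a.2 = !b.2)

instance : DecidableRel (Rel (α := α)) := fun a b => by unfold Rel; infer_instance

lemma reduce_eq_self_of_chain {L : List (α × Bool)} (h : List.Chain' Rel L) :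
    FreeGroup.reduce L = L := by
  induction L with
  | nil => rfl
  | cons x L ih =>
    have hL : FreeGroup.reduce L = L := ih h.tail
    rw [reduce.cons, hL]
    cases L with
    | nil => rfl
    | cons hd tl =>
      have hrel : Rel x hd := (List.isChain_cons_cons.mp h).1
      simp only []
      rw [if_neg hrel]

lemma chain_of_reduce_eq_self {L : List (α × Bool)} (h : FreeGroup.reduce L = L) :
    List.Chain' Rel L := by
  induction L with
  | nil => exact List.isChain_nil
  | cons x L ih =>
    rcases hL' : FreeGroup.reduce L with - | ⟨hd, tl⟩
    · rw [reduce.cons, hL'] at h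
      simp only [] at h
      have hLnil : L = [] := by
        injection h with _ h2
        exact h2.symm
      subst hLnil; exact List.isChain_singleton _
    · have hlen : (FreeGroup.reduce L).length ≤ L.length := Red.length_le reduce.red
      rw [reduce.cons, hL'] at h
      by_cases hc : x.1 = hd.1 ∧ x.2 = !hd.2
      · exfalso
        simp only [if_pos hc] at h
        have := congrArg List.length h
        rw [hL'] at hlen
        simp at this hlen
        omega
      · simp only [if_neg hc] at h
        have h2 : L = hd :: tl := by
          injection h with _ h2
          exact h2.symm
        have hred : FreeGroup.reduce L = L := by rw [hL', h2]
        have := ih hred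
        rw [h2]
        exact List.isChain_cons_cons.mpr ⟨hc, h2 ▸ this⟩

lemma norm_mk_of_chain {L : List (α × Bool)} (h : List.Chain' Rel L) :
    (FreeGroup.mk L).norm = L.length := by
  show (FreeGroup.mk L).toWord.length = L.length
  rw [toWord_mk, reduce_eq_self_of_chain h]

lemma chain_toWord (x : FreeGroup α) : List.Chain' Rel x.toWord :=
  chain_of_reduce_eq_self (reduce_toWord x)

lemma exists_lcp (u : List (α × Bool)) : ∀ w : List (α × Bool),
    ∃ s u' w', u = s ++ u' ∧ w = s ++ w' ∧
      (u' = [] ∨ w' = [] ∨ u'.head? ≠ w'.head?) := by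
  induction u with
  | nil => intro w; exact ⟨[], [], w, rfl, rfl, .inl rfl⟩
  | cons a u ih =>
    intro w
    rcases w with - | ⟨b, w⟩
    · exact ⟨[], a :: u, [], rfl, rfl, .inr (.inl rfl)⟩
    · by_cases hab : a = b
      · obtain ⟨s, u', w', h1, h2, h3⟩ := ih w
        exact ⟨a :: s, u', w', by simp [h1], by simp [hab, h2], h3⟩
      · refine ⟨[], a :: u, b :: w, rfl, rfl, .inr (.inr ?_)⟩
        simp [hab]


lemma rel_of_ne {b d : α × Bool} (h : b ≠ d) : Rel (b.1, !b.2) d := by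
  rintro ⟨h1, h2⟩
  apply h
  ext
  · exact h1
  · simpa using h2

lemma invRev_chain {L : List (α × Bool)} (h : List.Chain' Rel L) :
    List.Chain' Rel (invRev L) := by
  apply chain_of_reduce_eq_self
  rw [reduce_invRev, reduce_eq_self_of_chain h]

lemma invRev_cons (b : α × Bool) (L : List (α × Bool)) :
    invRev (b :: L) = invRev L ++ [(b.1, !b.2)] := by
  simp [invRev]

lemma cancel_mk (s A B : List (α × Bool)) :
    (FreeGroup.mk (s ++ A))⁻¹ * FreeGroup.mk (s ++ B) = FreeGroup.mk (invRev A ++ B) := by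
  rw [← mul_mk, ← mul_mk, mul_inv_rev, mul_assoc, inv_mul_cancel_left, inv_mk, mul_mk]

/-- Key geometric lemma: every nontrivial `g` has a "parent" `p` (one step closer
to the identity) such that for every `x` with `|x| ≤ |g|`, `x ≠ g`, the geodesic
from `x` to `g` passes through `p`. -/
lemma exists_parent (g : FreeGroup α) (hg : g ≠ 1) :
    ∃ p : FreeGroup α, p.norm + 1 = g.norm ∧
      ∀ x : FreeGroup α, x.norm ≤ g.norm → x ≠ g →
        (x⁻¹ * g).norm = (x⁻¹ * p).norm + 1 := by
  have hv : g.toWord ≠ [] := fun h => hg (toWord_eq_nil_iff.mp h)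
  obtain ⟨w, a, hwa⟩ : ∃ w a, g.toWord = w ++ [a] :=
    ⟨_, _, (List.dropLast_append_getLast hv).symm⟩
  have hchainv : List.Chain' Rel g.toWord := chain_toWord g
  have hchainw : List.Chain' Rel w := hchainv.prefix ⟨[a], hwa.symm⟩
  have hgmk : g = FreeGroup.mk (w ++ [a]) := by rw [← hwa, mk_toWord]
  have hnormg : g.norm = w.length + 1 := by
    show g.toWord.length = _
    rw [hwa]; simp
  refine ⟨FreeGroup.mk w, by rw [norm_mk_of_chain hchainw, hnormg], ?_⟩
  intro x hxle hxg
  have hchainu : List.Chain' Rel x.toWord := chain_toWord x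
  obtain ⟨s, u', w', h1, h2, h3⟩ := exists_lcp x.toWord w
  have hxmk : x = FreeGroup.mk (s ++ u') := by rw [← h1, mk_toWord]
  have hchainu' : List.Chain' Rel u' := hchainu.suffix (h1 ▸ ⟨s, rfl⟩)
  have hchainw' : List.Chain' Rel w' := hchainw.suffix (h2 ▸ ⟨s, rfl⟩)
  have hchainwa' : List.Chain' Rel (w' ++ [a]) := by
    apply hchainv.suffix
    rw [hwa, h2, List.append_assoc]
    exact ⟨s, rfl⟩
  have hxp : x⁻¹ * FreeGroup.mk w = FreeGroup.mk (invRev u' ++ w') := by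
    rw [hxmk, h2, cancel_mk]
  have hxg' : x⁻¹ * g = FreeGroup.mk (invRev u' ++ (w' ++ [a])) := by
    rw [hxmk, hgmk, h2, List.append_assoc, cancel_mk]
  rcases u' with - | ⟨b, u₁⟩
  · -- x is a prefix of w
    rw [invRev_empty, List.nil_append] at hxp hxg'
    rw [hxp, hxg', norm_mk_of_chain hchainwa', norm_mk_of_chain hchainw']
    simp
  rcases w' with - | ⟨d, w₁⟩
  · -- w is a proper prefix of x, so x = w ++ [b] with b ≠ a
    rw [List.append_nil] at h2
    subst h2
    have hlen : x.toWord.length ≤ w.length + 1 := by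
      rw [← hnormg]; exact hxle
    rw [h1, List.length_append] at hlen
    have hu₁ : u₁ = [] := by
      rcases u₁ with - | ⟨c, u₂⟩
      · rfl
      · exfalso; simp at hlen
    subst hu₁
    have hba : b ≠ a := by
      intro hba
      exact hxg (toWord_injective (by rw [h1, hwa, hba]))
    have hinv : invRev [b] = [(b.1, !b.2)] := by simp [invRev]
    rw [List.append_nil, hinv] at hxp
    rw [List.nil_append, hinv] at hxg'
    have hc1 : List.Chain' Rel [(b.1, !b.2)] := List.isChain_singleton _
    have hc2 : List.Chain' Rel [(b.1, !b.2), a] :=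
      List.isChain_cons_cons.mpr ⟨rel_of_ne hba, List.isChain_singleton _⟩
    rw [hxp, hxg', norm_mk_of_chain hc1]
    have : ([(b.1, !b.2)] ++ [a] : List (α × Bool)) = [(b.1, !b.2), a] := rfl
    rw [this, norm_mk_of_chain hc2]
    rfl
  · -- both nonempty with different heads
    have hbd : b ≠ d := by
      rcases h3 with h3 | h3 | h3
      · exact absurd h3 (by simp)
      · exact absurd h3 (by simp)
      · simpa using h3
    have hchaininv : List.Chain' Rel (invRev (b :: u₁)) := invRev_chain hchainu'
    have hlast : (invRev (b :: u₁)).getLast? = some (b.1, !b.2) := by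
      rw [invRev_cons, List.getLast?_concat]
    have hjunc : ∀ z ∈ (invRev (b :: u₁)).getLast?, ∀ y ∈ (d :: w₁).head?, Rel z y := by
      intro z hz y hy
      rw [hlast] at hz
      simp at hz hy
      subst hz; subst hy
      exact rel_of_ne hbd
    have hjunc2 : ∀ z ∈ (invRev (b :: u₁)).getLast?,
        ∀ y ∈ ((d :: w₁) ++ [a]).head?, Rel z y := by
      intro z hz y hy
      rw [List.cons_append, List.head?_cons] at hy
      exact hjunc z hz y (by simp [← Option.mem_def, hy] )
    have hch1 : List.Chain' Rel (invRev (b :: u₁) ++ (d :: w₁)) :=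
      List.isChain_append.mpr ⟨hchaininv, hchainw', hjunc⟩
    have hch2 : List.Chain' Rel (invRev (b :: u₁) ++ ((d :: w₁) ++ [a])) :=
      List.isChain_append.mpr ⟨hchaininv, hchainwa', hjunc2⟩
    rw [hxp, hxg', norm_mk_of_chain hch1, norm_mk_of_chain hch2]
    simp; omega

end HaagerupAux



namespace HaagerupAux2

variable {G : Type*} [DecidableEq G]

/-- quadratic form of a kernel over a finset -/
noncomputable def Q (K : G → G → ℂ) (S : Finset G) (c : G → ℂ) : ℂ :=
  ∑ x ∈ S, ∑ y ∈ S, c x * conj (c y) * K x y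

lemma Q_subset (K : G → G → ℂ) {S S' : Finset G} (h : S' ⊆ S) {c : G → ℂ}
    (hc : ∀ x ∈ S, x ∉ S' → c x = 0) : Q K S c = Q K S' c := by
  unfold Q
  calc ∑ x ∈ S, ∑ y ∈ S, c x * conj (c y) * K x y
      = ∑ x ∈ S, ∑ y ∈ S', c x * conj (c y) * K x y := by
        refine Finset.sum_congr rfl fun x _ => ?_
        refine (Finset.sum_subset h fun y hy hy' => ?_).symm
        rw [hc y hy hy']; simp
    _ = ∑ x ∈ S', ∑ y ∈ S', c x * conj (c y) * K x y := by
        refine (Finset.sum_subset h fun x hx hx' => ?_).symm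
        refine Finset.sum_eq_zero fun y _ => ?_
        rw [hc x hx hx']; ring

lemma double_insert {g p : G} {R' : Finset G} (hg : g ∉ insert p R') (hp : p ∉ R')
    (f : G → G → ℂ) :
    ∑ x ∈ insert g (insert p R'), ∑ y ∈ insert g (insert p R'), f x y
      = f g g + f g p + f p g + f p p
        + (∑ y ∈ R', f g y) + (∑ y ∈ R', f p y)
        + (∑ x ∈ R', f x g) + (∑ x ∈ R', f x p)
        + ∑ x ∈ R', ∑ y ∈ R', f x y := by
  simp only [Finset.sum_insert hg, Finset.sum_insert hp, Finset.sum_add_distrib]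
  ring

/-- The key algebraic decomposition of the quadratic form. -/
lemma Q_decomp (K : G → G → ℂ) (r : ℂ) (g p : G) (R' : Finset G)
    (hgP : g ∉ insert p R') (hpR : p ∉ R')
    (hKgg : K g g = 1) (hKpp : K p p = 1) (hKgp : K g p = r) (hKpg : K p g = r)
    (hconjr : conj r = r)
    (hK1 : ∀ y ∈ R', K g y = r * K p y) (hK2 : ∀ y ∈ R', K y g = r * K y p)
    (c : G → ℂ) :
    Q K (insert g (insert p R')) c
      = Q K (insert g (insert p R'))
          (fun x => if x = g then 0 else if x = p then c p + r * c g else c x)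
        + (1 - r ^ 2) * (c g * conj (c g)) := by
  have hgp : g ≠ p := fun h => hgP (h ▸ Finset.mem_insert_self _ _)
  have hgR : g ∉ R' := fun h => hgP (Finset.mem_insert_of_mem h)
  set c'' : G → ℂ := fun x => if x = g then 0 else if x = p then c p + r * c g else c x with hc''
  have hcg : c'' g = 0 := by simp [hc'']
  have hcp : c'' p = c p + r * c g := by simp [hc'', hgp.symm]
  have hcR : ∀ y ∈ R', c'' y = c y := by
    intro y hy
    have h1 : y ≠ g := fun h => hgR (h ▸ hy)
    have h2 : y ≠ p := fun h => hpR (h ▸ hy)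
    simp [hc'', h1, h2]
  unfold Q
  rw [double_insert hgP hpR, double_insert hgP hpR]
  set u : ℂ := ∑ y ∈ R', conj (c y) * K p y with hu
  set v : ℂ := ∑ x ∈ R', c x * K x p with hv
  have e1 : ∑ y ∈ R', c g * conj (c y) * K g y = c g * r * u := by
    rw [hu, Finset.mul_sum]
    refine Finset.sum_congr rfl fun y hy => ?_
    rw [hK1 y hy]; ring
  have e2 : ∑ y ∈ R', c p * conj (c y) * K p y = c p * u := by
    rw [hu, Finset.mul_sum]
    exact Finset.sum_congr rfl fun y hy => by ring
  have e3 : ∑ x ∈ R', c x * conj (c g) * K x g = conj (c g) * r * v := by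
    rw [hv, Finset.mul_sum]
    refine Finset.sum_congr rfl fun x hx => ?_
    rw [hK2 x hx]; ring
  have e4 : ∑ x ∈ R', c x * conj (c p) * K x p = conj (c p) * v := by
    rw [hv, Finset.mul_sum]
    exact Finset.sum_congr rfl fun x hx => by ring
  have f1 : ∑ y ∈ R', c'' g * conj (c'' y) * K g y = 0 := by
    refine Finset.sum_eq_zero fun y _ => by rw [hcg]; ring
  have f2 : ∑ y ∈ R', c'' p * conj (c'' y) * K p y = (c p + r * c g) * u := by
    rw [hu, Finset.mul_sum]
    refine Finset.sum_congr rfl fun y hy => ?_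
    rw [hcR y hy, hcp]; ring
  have f3 : ∑ x ∈ R', c'' x * conj (c'' g) * K x g = 0 := by
    refine Finset.sum_eq_zero fun x _ => by rw [hcg, map_zero]; ring
  have f4 : ∑ x ∈ R', c'' x * conj (c'' p) * K x p
      = (conj (c p) + r * conj (c g)) * v := by
    rw [hv, Finset.mul_sum]
    refine Finset.sum_congr rfl fun x hx => ?_
    rw [hcR x hx, hcp, map_add, map_mul, hconjr]; ring
  have f5 : ∑ x ∈ R', ∑ y ∈ R', c'' x * conj (c'' y) * K x y
      = ∑ x ∈ R', ∑ y ∈ R', c x * conj (c y) * K x y := by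
    refine Finset.sum_congr rfl fun x hx => Finset.sum_congr rfl fun y hy => ?_
    rw [hcR x hx, hcR y hy]
  rw [e1, e2, e3, e4, f1, f2, f3, f4, f5, hKgg, hKpp, hKgp, hKpg, hcg, hcp]
  rw [map_add, map_mul, hconjr, map_zero]
  ring

end HaagerupAux2



namespace HaagerupAux3
open HaagerupAux HaagerupAux2

variable {α : Type*} [DecidableEq α]

/-- The kernel `r ^ d(x,y)` on the free group. -/
def Kr (r : ℝ) (x y : FreeGroup α) : ℂ := ((r ^ (FreeGroup.norm (y⁻¹ * x)) : ℝ) : ℂ)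

lemma Kr_pow (r : ℝ) (x y : FreeGroup α) : Kr r x y = ((r : ℂ)) ^ (FreeGroup.norm (y⁻¹ * x)) := by
  unfold Kr; push_cast; ring

lemma main (r : ℝ) (hr0 : 0 < r) (hr1 : r < 1) :
    ∀ (n : ℕ) (S : Finset (FreeGroup α)) (c : FreeGroup α → ℂ),
      (∑ x ∈ S, (FreeGroup.norm x + 1)) ≤ n → (∀ x, x ∉ S → c x = 0) →
      0 ≤ Q (Kr r) S c ∧ (c ≠ 0 → 0 < Q (Kr r) S c) := by
  intro n
  induction n with
  | zero =>
    intro S c hM hsupp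
    have hS : S = ∅ := by
      by_contra hne
      obtain ⟨x, hx⟩ := Finset.nonempty_of_ne_empty hne
      have h1 : FreeGroup.norm x + 1 ≤ ∑ y ∈ S, (FreeGroup.norm y + 1) :=
        Finset.single_le_sum (f := fun y => FreeGroup.norm y + 1) (fun _ _ => Nat.zero_le _) hx
      omega
    subst hS
    constructor
    · simp [Q]
    · intro hc
      exfalso
      exact hc (funext fun x => hsupp x (Finset.notMem_empty x))
  | succ n ih =>
    intro S c hM hsupp
    classical
    set S' := S.filter (fun x => c x ≠ 0) with hS'
    have hsub : S' ⊆ S := Finset.filter_subset _ _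
    have hvanish : ∀ x ∈ S, x ∉ S' → c x = 0 := by
      intro x hx hx'
      by_contra h
      exact hx' (Finset.mem_filter.mpr ⟨hx, h⟩)
    have hsupp' : ∀ x, x ∉ S' → c x = 0 := by
      intro x hx
      by_cases h : x ∈ S
      · exact hvanish x h hx
      · exact hsupp x h
    have hQSS' : Q (Kr r) S c = Q (Kr r) S' c := Q_subset _ hsub hvanish
    rcases Finset.eq_empty_or_nonempty S' with he | hne
    · have hc0 : c = 0 := funext fun x => hsupp' x (he ▸ Finset.notMem_empty x)
      constructor
      · rw [hQSS', he]; simp [Q]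
      · intro hc; exact absurd hc0 hc
    · obtain ⟨g, hgS', hgmax⟩ := Finset.exists_max_image S' FreeGroup.norm hne
      have hcg : c g ≠ 0 := (Finset.mem_filter.mp hgS').2
      have key : 0 < Q (Kr r) S c := by
        by_cases hg1 : g = 1
        · -- S' = {g}
          have hS'g : S' = {g} := by
            apply Finset.eq_singleton_iff_unique_mem.mpr
            refine ⟨hgS', fun x hx => ?_⟩
            have := hgmax x hx
            rw [hg1, FreeGroup.norm_one] at this
            have hx0 : FreeGroup.norm x = 0 := Nat.le_zero.mp this
            rw [FreeGroup.norm_eq_zero.mp hx0, hg1]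
          rw [hQSS', hS'g]
          have : Q (Kr r) {g} c = c g * conj (c g) * Kr r g g := by
            simp [Q]
          rw [this]
          have hK : Kr r g g = 1 := by
            unfold Kr; simp
          rw [hK, mul_one, Complex.mul_conj]
          rw [Complex.zero_lt_real]
          exact Complex.normSq_pos.mpr hcg
        · -- main step
          obtain ⟨p, hpnorm, hpkey⟩ := exists_parent g hg1
          have hgp : g ≠ p := by
            intro h
            rw [← h] at hpnorm
            omega
          set T := insert p S' with hT
          have hgT : g ∈ T := Finset.mem_insert_of_mem hgS'
          have hpT : p ∈ T := Finset.mem_insert_self _ _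
          set R' := (T.erase g).erase p with hR'
          have hpeg : p ∈ T.erase g := Finset.mem_erase.mpr ⟨fun h => hgp h.symm, hpT⟩
          have hTeq : T = insert g (insert p R') := by
            rw [hR', Finset.insert_erase hpeg, Finset.insert_erase hgT]
          have hgP : g ∉ insert p R' := by
            rw [hR', Finset.insert_erase hpeg]
            exact Finset.notMem_erase _ _
          have hpR : p ∉ R' := Finset.notMem_erase _ _
          -- kernel facts
          have hnormp1 : FreeGroup.norm (p⁻¹ * p) = 0 := by simp
          have hKgg : Kr r g g = 1 := by unfold Kr; simp
          have hKpp : Kr r p p = 1 := by unfold Kr; simp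
          have hdgp : FreeGroup.norm (p⁻¹ * g) = 1 := by
            rw [hpkey p (by omega) (fun h => hgp h.symm), hnormp1]
          have hKgp : Kr r g p = (r : ℂ) := by
            unfold Kr; rw [hdgp]; simp
          have hKpg : Kr r p g = (r : ℂ) := by
            unfold Kr
            have : FreeGroup.norm (g⁻¹ * p) = 1 := by
              rw [← FreeGroup.norm_inv_eq, mul_inv_rev, inv_inv, hdgp]
            rw [this]; simp
          have hmemR' : ∀ y ∈ R', y ∈ S' ∧ y ≠ g := by
            intro y hy
            have h1 := Finset.mem_erase.mp hy
            have h2 := Finset.mem_erase.mp h1.2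
            rcases Finset.mem_insert.mp h2.2 with h | h
            · exact absurd h h1.1
            · exact ⟨h, h2.1⟩
          have hK1 : ∀ y ∈ R', Kr r g y = (r : ℂ) * Kr r p y := by
            intro y hy
            obtain ⟨hyS', hyg⟩ := hmemR' y hy
            have hd : FreeGroup.norm (y⁻¹ * g) = FreeGroup.norm (y⁻¹ * p) + 1 :=
              hpkey y (hgmax y hyS') hyg
            rw [Kr_pow, Kr_pow, hd, pow_succ]
            ring
          have hK2 : ∀ y ∈ R', Kr r y g = (r : ℂ) * Kr r y p := by
            intro y hy
            obtain ⟨hyS', hyg⟩ := hmemR' y hy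
            have hd : FreeGroup.norm (y⁻¹ * g) = FreeGroup.norm (y⁻¹ * p) + 1 :=
              hpkey y (hgmax y hyS') hyg
            have hd2 : FreeGroup.norm (g⁻¹ * y) = FreeGroup.norm (p⁻¹ * y) + 1 := by
              rw [← FreeGroup.norm_inv_eq (x := g⁻¹ * y), ← FreeGroup.norm_inv_eq (x := p⁻¹ * y),
                mul_inv_rev, mul_inv_rev, inv_inv, inv_inv, hd]
            rw [Kr_pow, Kr_pow, hd2, pow_succ]
            ring
          -- Q over T
          have hQS'T : Q (Kr r) S' c = Q (Kr r) T c := by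
            refine (Q_subset _ (Finset.subset_insert p S') ?_).symm
            intro x hx hx'
            exact hsupp' x hx'
          set c'' : FreeGroup α → ℂ :=
            fun x => if x = g then 0 else if x = p then c p + (r : ℂ) * c g else c x with hc''def
          have hdecomp : Q (Kr r) T c = Q (Kr r) T c'' + (1 - (r : ℂ) ^ 2) * (c g * conj (c g)) := by
            rw [hTeq]
            exact Q_decomp (Kr r) (r : ℂ) g p R' hgP hpR hKgg hKpp hKgp hKpg
              (Complex.conj_ofReal r) hK1 hK2 c
          have hcg'' : c'' g = 0 := by simp [hc''def]
          have hQT : Q (Kr r) T c'' = Q (Kr r) (T.erase g) c'' := by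
            refine Q_subset _ (Finset.erase_subset _ _) ?_
            intro x hx hx'
            have : x = g := by
              by_contra h
              exact hx' (Finset.mem_erase.mpr ⟨h, hx⟩)
            rw [this, hcg'']
          -- measure bound
          have hMerase : (∑ x ∈ T.erase g, (FreeGroup.norm x + 1)) ≤ n := by
            have h1 : (∑ x ∈ T.erase g, (FreeGroup.norm x + 1)) + (FreeGroup.norm g + 1)
                = ∑ x ∈ T, (FreeGroup.norm x + 1) :=
              Finset.sum_erase_add T _ hgT
            have h2 : (∑ x ∈ T, (FreeGroup.norm x + 1))
                ≤ (FreeGroup.norm p + 1) + ∑ x ∈ S', (FreeGroup.norm x + 1) := by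
              by_cases hpS : p ∈ S'
              · rw [hT, Finset.insert_eq_self.mpr hpS]
                omega
              · rw [hT, Finset.sum_insert hpS]
            have h3 : (∑ x ∈ S', (FreeGroup.norm x + 1)) ≤ ∑ x ∈ S, (FreeGroup.norm x + 1) :=
              Finset.sum_le_sum_of_subset hsub
            omega
          have hsupp'' : ∀ x, x ∉ T.erase g → c'' x = 0 := by
            intro x hx
            by_cases hxg : x = g
            · rw [hxg]; exact hcg''
            · have hxT : x ∉ T := fun h => hx (Finset.mem_erase.mpr ⟨hxg, h⟩)
              have hxp : x ≠ p := fun h => hxT (h ▸ hpT)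
              have hxS' : x ∉ S' := fun h => hxT (Finset.mem_insert_of_mem h)
              simp only [hc''def, if_neg hxg, if_neg hxp]
              exact hsupp' x hxS'
          have hIH := (ih (T.erase g) c'' hMerase hsupp'').1
          -- conclude
          rw [hQSS', hQS'T, hdecomp, hQT]
          have hpos : 0 < (1 - (r : ℂ) ^ 2) * (c g * conj (c g)) := by
            rw [Complex.mul_conj]
            have : (1 - (r : ℂ) ^ 2) * ((Complex.normSq (c g) : ℝ) : ℂ)
                = (((1 - r ^ 2) * Complex.normSq (c g) : ℝ) : ℂ) := by
              push_cast; ring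
            rw [this, Complex.zero_lt_real]
            have h1 : 0 < 1 - r ^ 2 := by nlinarith
            have h2 : 0 < Complex.normSq (c g) := Complex.normSq_pos.mpr hcg
            positivity
          calc (0 : ℂ) < 0 + (1 - (r : ℂ) ^ 2) * (c g * conj (c g)) := by
                rw [zero_add]; exact hpos
            _ ≤ Q (Kr r) (T.erase g) c'' + (1 - (r : ℂ) ^ 2) * (c g * conj (c g)) := by
                exact add_le_add hIH le_rfl
      exact ⟨le_of_lt key, fun _ => key⟩

end HaagerupAux3

/-- `k` is strictly positive definite on `X`. -/
def IsStrictPosKernel {X : Type*} (k : X → X → ℂ) : Prop :=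
  ∀ (n : ℕ) (x : Fin n → X), Function.Injective x →
    ∀ c : Fin n → ℂ, c ≠ 0 →
      0 < ∑ i, ∑ j, c i * conj (c j) * k (x i) (x j)

/-- For a free group on finitely many generators with word length `|·|` and any `t > 0`,
the Haagerup kernel `(g,h) ↦ exp (−t |h⁻¹ g|)` is strictly positive definite. -/
theorem haagerup_kernel_isStrictPosKernel (N : ℕ) (t : ℝ) (ht : 0 < t) :
    IsStrictPosKernel (fun g h : FreeGroup (Fin N) =>
      (Real.exp (-t * (FreeGroup.norm (h⁻¹ * g) : ℝ)) : ℂ)) := by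
  intro n x hinj c hc
  classical
  set r : ℝ := Real.exp (-t) with hr
  have hr0 : 0 < r := Real.exp_pos _
  have hr1 : r < 1 := Real.exp_lt_one_iff.mpr (by linarith)
  have hkernel : ∀ g h : FreeGroup (Fin N),
      (Real.exp (-t * (FreeGroup.norm (h⁻¹ * g) : ℝ)) : ℂ) = HaagerupAux3.Kr r g h := by
    intro g h
    rw [HaagerupAux3.Kr]
    norm_cast
    rw [mul_comm, Real.exp_nat_mul]
  set S : Finset (FreeGroup (Fin N)) := Finset.image x Finset.univ with hS
  set cc : FreeGroup (Fin N) → ℂ :=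
    fun g => if hg : ∃ i, x i = g then c hg.choose else 0 with hcc
  have hccx : ∀ i, cc (x i) = c i := by
    intro i
    have hg : ∃ j, x j = x i := ⟨i, rfl⟩
    rw [hcc]
    simp only [dif_pos hg]
    have := hg.choose_spec
    rw [hinj this]
  have hsupp : ∀ g, g ∉ S → cc g = 0 := by
    intro g hg
    rw [hcc]
    simp only []
    rw [dif_neg]
    rintro ⟨i, rfl⟩
    exact hg (Finset.mem_image.mpr ⟨i, Finset.mem_univ i, rfl⟩)
  have hccne : cc ≠ 0 := by
    obtain ⟨i, hi⟩ := Function.ne_iff.mp hc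
    intro h0
    apply hi
    rw [← hccx i, h0]
    rfl
  have hinj' : ∀ i ∈ Finset.univ, ∀ j ∈ Finset.univ, x i = x j → i = j :=
    fun i _ j _ e => hinj e
  have hQ : ∑ i, ∑ j, c i * conj (c j) *
        (Real.exp (-t * (FreeGroup.norm ((x j)⁻¹ * x i) : ℝ)) : ℂ)
      = HaagerupAux2.Q (HaagerupAux3.Kr r) S cc := by
    rw [HaagerupAux2.Q, hS, Finset.sum_image hinj']
    refine Finset.sum_congr rfl fun i _ => ?_
    rw [Finset.sum_image hinj']
    refine Finset.sum_congr rfl fun j _ => ?_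
    rw [hccx i, hccx j, hkernel]
  rw [hQ]
  exact (HaagerupAux3.main r hr0 hr1 (∑ g ∈ S, (FreeGroup.norm g + 1)) S cc le_rfl hsupp).2 hccne
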